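/- For every square-free positive integer n and every integer k ≥ 2, there exists a divisor d of n with d ≤ n^{1/k} and τ(n) ≤ 2^k · τ(d)^k, where τ is the number-of-divisors function. -/

import Mathlib

lemma tau_of_squarefree (n : ℕ) (hn : n ≠ 0) (h : Squarefree n) :
    n.divisors.card = 2 ^ n.primeFactors.card := by
  rw [Nat.card_divisors hn, Finset.prod_congr rfl (g := fun _ => 2), Finset.prod_const]
  intro p hp
  have h1 : n.factorization p ≤ 1 := by
    rcases Nat.squarefree_iff_factorization_le_one hn |>.mp h p with h'
    omega
  have h2 : 1 ≤ n.factorization p :=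
    (Nat.Prime.factorization_pos_of_dvd (Nat.prime_of_mem_primeFactors hp) hn
      (Nat.dvd_of_mem_primeFactors hp))
  omega

lemma prod_take_eq (L : List ℕ) (t : ℕ) :
    (L.take t).prod = ∏ i ∈ Finset.range t, L.getD i 1 := by
  induction t with
  | zero => simp
  | succ t ih =>
    rw [Finset.prod_range_succ, ← ih]
    by_cases h : t < L.length
    · rw [List.prod_take_succ _ _ h, List.getD_eq_getElem _ _ h]
    · push_neg at h
      rw [List.take_of_length_le (by omega), List.take_of_length_le h,
        List.getD_eq_default _ _ h, mul_one]

/-- For every square-free `n` and `k ≥ 2` there is a divisor `d ∣ n` with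
`d ≤ n^(1/k)` and `τ(n) ≤ 2^k · τ(d)^k`. -/
theorem divisor_bound_squarefree (n : ℕ) (hn : 0 < n) (hsq : Squarefree n)
    (k : ℕ) (hk : 2 ≤ k) :
    ∃ d : ℕ, d ∣ n ∧ (d : ℝ) ≤ (n : ℝ) ^ ((1 : ℝ) / k) ∧
      n.divisors.card ≤ 2 ^ k * d.divisors.card ^ k := by
  set L := n.primeFactorsList with hL
  set r := L.length with hr
  set m := r / k with hm
  set d := (L.take m).prod with hd
  have hLprod : L.prod = n := Nat.prod_primeFactorsList hn.ne'
  have hLnodup : L.Nodup := (Nat.squarefree_iff_nodup_primeFactorsList hn.ne').mp hsq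
  have hLsorted : L.Pairwise (· ≤ ·) := (Nat.primeFactorsList_sorted n).pairwise
  have hLprime : ∀ p ∈ L, p.Prime := fun p hp => Nat.prime_of_mem_primeFactorsList hp
  have hkm : k * m ≤ r := by rw [mul_comm]; exact Nat.div_mul_le_self r k
  -- getD monotone on valid indices
  have hmono : ∀ i j : ℕ, i ≤ j → j < r → L.getD i 1 ≤ L.getD j 1 := by
    intro i j hij hj
    rw [List.getD_eq_getElem _ _ (by omega : i < L.length),
      List.getD_eq_getElem _ _ (by omega : j < L.length)]
    exact List.Pairwise.rel_get_of_le hLsorted (a := ⟨i, by omega⟩) (b := ⟨j, by omega⟩) hij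
  -- divisibility
  have hdvd : d ∣ n := hLprod ▸ (List.take_sublist m L).prod_dvd_prod
  have hdpos : 0 < d := Nat.pos_of_dvd_of_pos hdvd hn
  -- d^k ≤ n
  have key : ∀ j ≤ k, d ^ j ≤ ∏ i ∈ Finset.range (j * m), L.getD i 1 := by
    intro j hj
    induction j with
    | zero => simp
    | succ j ih =>
      rw [pow_succ, add_mul, one_mul, Finset.prod_range_add]
      refine Nat.mul_le_mul (ih (by omega)) ?_
      rw [hd, prod_take_eq]
      refine Finset.prod_le_prod' fun i hi => ?_
      rw [Finset.mem_range] at hi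
      refine hmono i (j * m + i) (by omega) ?_
      have h1 : (j + 1) * m ≤ k * m := Nat.mul_le_mul_right _ (by omega)
      have h2 : (j + 1) * m = j * m + m := by ring
      omega
  have hdkn : d ^ k ≤ n := by
    refine (key k le_rfl).trans ?_
    rw [← prod_take_eq]
    refine Nat.le_of_dvd hn ?_
    exact hLprod ▸ (List.take_sublist (k * m) L).prod_dvd_prod
  -- real inequality
  have hreal : (d : ℝ) ≤ (n : ℝ) ^ ((1 : ℝ) / k) := by
    have hk0 : (k : ℝ) ≠ 0 := by positivity
    have h1 : ((d : ℝ) ^ (k : ℕ)) ^ ((1 : ℝ) / k) ≤ (n : ℝ) ^ ((1 : ℝ) / k) := by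
      apply Real.rpow_le_rpow (by positivity) _ (by positivity)
      exact_mod_cast hdkn
    rwa [← Real.rpow_natCast (d : ℝ) k, ← Real.rpow_mul (by positivity),
      mul_one_div, div_self hk0, Real.rpow_one] at h1
  -- τ(d) = 2^m
  have hmr : m ≤ r := Nat.div_le_self _ _
  have hdsq : Squarefree d := hsq.squarefree_of_dvd hdvd
  have htaken : (L.take m).Nodup := hLnodup.sublist (List.take_sublist m L)
  have hdprime : d.primeFactors = (L.take m).toFinset := by
    have : d = ∏ p ∈ (L.take m).toFinset, p := by
      rw [List.prod_toFinset _ htaken]; simp [hd]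
    rw [this, Nat.primeFactors_prod]
    intro p hp
    exact hLprime p (List.mem_toFinset.mp hp |> (List.take_sublist m L).mem)
  have hcard : d.primeFactors.card = m := by
    rw [hdprime, List.toFinset_card_of_nodup htaken, List.length_take]
    omega
  have htd : d.divisors.card = 2 ^ m := by
    rw [tau_of_squarefree d hdpos.ne' hdsq, hcard]
  have htn : n.divisors.card = 2 ^ r := by
    rw [tau_of_squarefree n hn.ne' hsq, ← Nat.toFinset_factors,
      List.toFinset_card_of_nodup hLnodup]
  refine ⟨d, hdvd, hreal, ?_⟩
  rw [htn, htd, ← pow_mul, ← pow_add]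
  refine Nat.pow_le_pow_right (by norm_num) ?_
  rw [hm]
  have h1 : r % k + r / k * k = r := Nat.mod_add_div' r k
  have h2 : r % k < k := Nat.mod_lt _ (by omega)
  omega
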